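/- (Uniform winner, congruent loser: strict improvement over the extremal structures.) Let v1 = v2 = 1 and let g be supported on two CTR pairs, g((r1,r2)) = p and g((r'1,r'2)) = 1−p, with p ∈ (0,1), r1, r2, r'1, r'2 ∈ (0,1], r1 > r'1, r2 > r'2, r1 ≥ r2, r'1 ≥ r'2, and r2 < μ1 where μ1 = p·r1 + (1−p)·r'1. Then the no-disclosure revenue and the full-disclosure revenue of g are both equal to μ2 = p·r2 + (1−p)·r'2, and there exists a calibrated information structure x for g with Rev(x) = μ2 + p·(1−p)·(r1−r'1)·(r2−r'2)/μ1 > μ2; in particular, a calibrated information structure strictly revenue-dominates both extremal structures. -/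

import Mathlib

open scoped Classical

noncomputable section

/-- A CTR pair lies in the unit square. -/
def InUnitSq (r : ℝ × ℝ) : Prop := 0 ≤ r.1 ∧ r.1 ≤ 1 ∧ 0 ≤ r.2 ∧ r.2 ≤ 1

/-- A finitely supported probability mass function on CTR pairs in [0,1]². -/
def IsPrior (g : ℝ × ℝ → ℝ) : Prop :=
  (Function.support g).Finite ∧ (∀ r, 0 ≤ g r) ∧
  (∀ r, g r ≠ 0 → InUnitSq r) ∧ (∑ᶠ r, g r) = 1

/-- An information structure for the prior `g`: finitely supported, nonnegative,
signals in [0,1]², with `r`-marginal equal to `g`. -/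
def IsInfoStructure (g : ℝ × ℝ → ℝ) (x : (ℝ × ℝ) × (ℝ × ℝ) → ℝ) : Prop :=
  (Function.support x).Finite ∧ (∀ p, 0 ≤ x p) ∧
  (∀ p, x p ≠ 0 → InUnitSq p.2) ∧ (∀ r, (∑ᶠ s, x (r, s)) = g r)

/-- Calibration: the posterior mean of `rᵢ` given any signal value `c` of bidder `i`
equals `c`. -/
def Calibrated (x : (ℝ × ℝ) × (ℝ × ℝ) → ℝ) : Prop :=
  ∀ c : ℝ, 0 ≤ c → c ≤ 1 →
    (∑ᶠ p : (ℝ × ℝ) × (ℝ × ℝ), if p.2.1 = c then x p * (p.1.1 - c) else 0) = 0 ∧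
    (∑ᶠ p : (ℝ × ℝ) × (ℝ × ℝ), if p.2.2 = c then x p * (p.1.2 - c) else 0) = 0

/-- Independence: for each bidder `i` and each signal pair `s0` with positive
probability, the conditional mean of `rᵢ` given the full signal pair equals the
conditional mean of `rᵢ` given `sᵢ` alone (stated in cross-multiplied form). -/
def Independent (x : (ℝ × ℝ) × (ℝ × ℝ) → ℝ) : Prop :=
  ∀ s0 : ℝ × ℝ, 0 < (∑ᶠ r, x (r, s0)) →
    ((∑ᶠ r, x (r, s0) * r.1) *
        (∑ᶠ p : (ℝ × ℝ) × (ℝ × ℝ), if p.2.1 = s0.1 then x p else 0)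
      = (∑ᶠ p : (ℝ × ℝ) × (ℝ × ℝ), if p.2.1 = s0.1 then x p * p.1.1 else 0) *
        (∑ᶠ r, x (r, s0))) ∧
    ((∑ᶠ r, x (r, s0) * r.2) *
        (∑ᶠ p : (ℝ × ℝ) × (ℝ × ℝ), if p.2.2 = s0.2 then x p else 0)
      = (∑ᶠ p : (ℝ × ℝ) × (ℝ × ℝ), if p.2.2 = s0.2 then x p * p.1.2 else 0) *
        (∑ᶠ r, x (r, s0)))

/-- Expected payment of the click-through auction given CTRs `r` and signals `s`,
with uniform tie-breaking (division by zero is zero in Lean, matching t/0 = 0). -/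
def pay (v1 v2 : ℝ) (r s : ℝ × ℝ) : ℝ :=
  if v2 * s.2 < v1 * s.1 then r.1 * (v2 * s.2 / s.1)
  else if v1 * s.1 < v2 * s.2 then r.2 * (v1 * s.1 / s.2)
  else (r.1 * (v2 * s.2 / s.1) + r.2 * (v1 * s.1 / s.2)) / 2

/-- Expected revenue of an information structure. -/
def Rev (v1 v2 : ℝ) (x : (ℝ × ℝ) × (ℝ × ℝ) → ℝ) : ℝ :=
  ∑ᶠ p : (ℝ × ℝ) × (ℝ × ℝ), x p * pay v1 v2 p.1 p.2

/-- Revenue of the no-disclosure information structure. -/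
def noDisclosureRev (v1 v2 : ℝ) (g : ℝ × ℝ → ℝ) : ℝ :=
  min (v1 * ∑ᶠ r : ℝ × ℝ, g r * r.1) (v2 * ∑ᶠ r : ℝ × ℝ, g r * r.2)

/-- Revenue of the full-disclosure information structure. -/
def fullDisclosureRev (v1 v2 : ℝ) (g : ℝ × ℝ → ℝ) : ℝ :=
  ∑ᶠ r : ℝ × ℝ, g r * min (v1 * r.1) (v2 * r.2)


lemma finsum_pair' {α : Type*} (f : α → ℝ) (a b : α) (hab : a ≠ b)
    (h : ∀ c, c ≠ a → c ≠ b → f c = 0) : ∑ᶠ c, f c = f a + f b := by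
  have hsub : Function.support f ⊆ (({a, b} : Finset α) : Set α) := by
    intro c hc
    by_contra hcn
    simp only [Finset.coe_insert, Finset.coe_singleton, Set.mem_insert_iff,
      Set.mem_singleton_iff, not_or] at hcn
    exact hc (h c hcn.1 hcn.2)
  rw [finsum_eq_sum_of_support_subset f hsub, Finset.sum_pair hab]

/-- uniform winner, congruent loser: both extremal structures
yield μ2, and some calibrated information structure yields exactly
μ2 + p(1−p)(r1−r1')(r2−r2')/μ1 > μ2. -/
theorem uniform_winner_congruent_loser_strict_improvement
    (p r1 r2 r1' r2' : ℝ) (hp0 : 0 < p) (hp1 : p < 1)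
    (hr1 : 0 < r1) (hr1'' : r1 ≤ 1) (hr2 : 0 < r2) (hr2'' : r2 ≤ 1)
    (hr1'0 : 0 < r1') (hr1'1 : r1' ≤ 1) (hr2'0 : 0 < r2') (hr2'1 : r2' ≤ 1)
    (h11' : r1' < r1) (h22' : r2' < r2) (h12 : r2 ≤ r1) (h1'2' : r2' ≤ r1')
    (hweak : r2 < p * r1 + (1 - p) * r1')
    (g : ℝ × ℝ → ℝ)
    (hgdef : ∀ r, g r = if r = (r1, r2) then p else if r = (r1', r2') then 1 - p else 0) :
    noDisclosureRev 1 1 g = p * r2 + (1 - p) * r2' ∧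
    fullDisclosureRev 1 1 g = p * r2 + (1 - p) * r2' ∧
    ∃ x : (ℝ × ℝ) × (ℝ × ℝ) → ℝ,
      IsInfoStructure g x ∧ Calibrated x ∧
      Rev 1 1 x = p * r2 + (1 - p) * r2' +
        p * (1 - p) * (r1 - r1') * (r2 - r2') / (p * r1 + (1 - p) * r1') ∧
      p * r2 + (1 - p) * r2' < Rev 1 1 x := by

  set μ : ℝ := p * r1 + (1 - p) * r1' with hμ
  have hμpos : 0 < μ := by rw [hμ]; nlinarith
  have hμ1 : μ ≤ 1 := by rw [hμ]; nlinarith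
  have hr2μ : r2 < μ := hweak
  have hr2'μ : r2' < μ := lt_trans h22' hweak
  have hμ2le : p * r2 + (1 - p) * r2' ≤ μ := by rw [hμ]; nlinarith
  have hne12 : ((r1, r2) : ℝ × ℝ) ≠ (r1', r2') := by
    simp only [ne_eq, Prod.mk.injEq, not_and]
    intro h; exact absurd h (by linarith)
  set A : (ℝ × ℝ) × (ℝ × ℝ) := ((r1, r2), (μ, r2)) with hA
  set B : (ℝ × ℝ) × (ℝ × ℝ) := ((r1', r2'), (μ, r2')) with hB
  have hAB : A ≠ B := fun h => hne12 (congrArg Prod.fst h)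
  set x : (ℝ × ℝ) × (ℝ × ℝ) → ℝ :=
    fun q => if q = A then p else if q = B then 1 - p else 0 with hx
  have hxA : x A = p := by rw [hx]; simp
  have hxB : x B = 1 - p := by rw [hx]; simp [hAB.symm]
  have hxcase : ∀ q, q ≠ A → q ≠ B → x q = 0 := by
    intro q h1 h2; rw [hx]; simp [h1, h2]
  have hg1 : g (r1, r2) = p := by rw [hgdef]; simp
  have hg2 : g (r1', r2') = 1 - p := by
    rw [hgdef, if_neg hne12.symm, if_pos rfl]
  have hg0 : ∀ r : ℝ × ℝ, r ≠ (r1, r2) → r ≠ (r1', r2') → g r = 0 := by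
    intro r h1 h2; rw [hgdef, if_neg h1, if_neg h2]
  -- no disclosure
  have hs1 : (∑ᶠ r : ℝ × ℝ, g r * r.1) = μ := by
    rw [finsum_pair' (fun r : ℝ × ℝ => g r * r.1) (r1, r2) (r1', r2') hne12
      (fun c h1 h2 => by simp [hg0 c h1 h2])]
    simp only [hg1, hg2]
    exact hμ.symm
  have hs2 : (∑ᶠ r : ℝ × ℝ, g r * r.2) = p * r2 + (1 - p) * r2' := by
    rw [finsum_pair' (fun r : ℝ × ℝ => g r * r.2) (r1, r2) (r1', r2') hne12
      (fun c h1 h2 => by simp [hg0 c h1 h2])]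
    simp only [hg1, hg2]
  have hnd : noDisclosureRev 1 1 g = p * r2 + (1 - p) * r2' := by
    rw [noDisclosureRev, hs1, hs2, one_mul, one_mul, min_eq_right hμ2le]
  -- full disclosure
  have hfd : fullDisclosureRev 1 1 g = p * r2 + (1 - p) * r2' := by
    rw [fullDisclosureRev,
      finsum_pair' (fun r : ℝ × ℝ => g r * min (1 * r.1) (1 * r.2)) (r1, r2) (r1', r2') hne12
        (fun c h1 h2 => by simp [hg0 c h1 h2])]
    simp only [hg1, hg2, one_mul]
    rw [min_eq_right h12, min_eq_right h1'2']
  -- info structure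
  have hsne : ((μ, r2) : ℝ × ℝ) ≠ (μ, r2') := by
    simp only [ne_eq, Prod.mk.injEq, not_and]
    intro _ h; exact absurd h (by linarith)
  have hinfo : IsInfoStructure g x := by
    refine ⟨?_, ?_, ?_, ?_⟩
    · refine Set.Finite.subset ((Set.finite_singleton B).insert A) ?_
      intro q hq
      by_contra hcn
      simp only [Set.mem_insert_iff, Set.mem_singleton_iff, not_or] at hcn
      exact hq (hxcase q hcn.1 hcn.2)
    · intro q; rw [hx]; dsimp only; split_ifs <;> linarith
    · intro q hq
      have hqAB : q = A ∨ q = B := by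
        by_contra hcn
        simp only [not_or] at hcn
        exact hq (hxcase q hcn.1 hcn.2)
      rcases hqAB with rfl | rfl
      · exact ⟨hμpos.le, hμ1, hr2.le, hr2''⟩
      · exact ⟨hμpos.le, hμ1, hr2'0.le, hr2'1⟩
    · intro r
      have hoff : ∀ c : ℝ × ℝ, c ≠ (μ, r2) → c ≠ (μ, r2') → x (r, c) = 0 := by
        intro c h1 h2
        refine hxcase _ ?_ ?_
        · rw [hA]; intro h; exact h1 (congrArg Prod.snd h)
        · rw [hB]; intro h; exact h2 (congrArg Prod.snd h)
      rw [finsum_pair' (fun s => x (r, s)) (μ, r2) (μ, r2') hsne hoff]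
      by_cases hr1c : r = (r1, r2)
      · subst hr1c
        have h1 : x ((r1, r2), (μ, r2)) = p := hxA
        have h2 : x ((r1, r2), (μ, r2')) = 0 := by
          refine hxcase _ ?_ ?_
          · rw [hA]; intro h
            exact hsne (congrArg Prod.snd h).symm
          · rw [hB]; intro h
            exact hne12 (congrArg Prod.fst h)
        rw [h1, h2, hg1, add_zero]
      · by_cases hr2c : r = (r1', r2')
        · subst hr2c
          have h1 : x ((r1', r2'), (μ, r2)) = 0 := by
            refine hxcase _ ?_ ?_
            · rw [hA]; intro h
              exact hne12 (congrArg Prod.fst h).symm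
            · rw [hB]; intro h
              exact hsne (congrArg Prod.snd h)
          have h2 : x ((r1', r2'), (μ, r2')) = 1 - p := hxB
          rw [h1, h2, hg2, zero_add]
        · have h1 : x (r, (μ, r2)) = 0 := by
            refine hxcase _ ?_ ?_
            · rw [hA]; intro h; exact hr1c (congrArg Prod.fst h)
            · rw [hB]; intro h; exact hr2c (congrArg Prod.fst h)
          have h2 : x (r, (μ, r2')) = 0 := by
            refine hxcase _ ?_ ?_
            · rw [hA]; intro h; exact hr1c (congrArg Prod.fst h)
            · rw [hB]; intro h; exact hr2c (congrArg Prod.fst h)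
          rw [h1, h2, hg0 r hr1c hr2c, add_zero]
  -- calibration
  have hcal : Calibrated x := by
    intro c hc0 hc1
    constructor
    · rw [finsum_pair'
        (fun q : (ℝ × ℝ) × (ℝ × ℝ) => if q.2.1 = c then x q * (q.1.1 - c) else 0) A B hAB
        (fun q h1 h2 => by simp [hxcase q h1 h2])]
      simp only [hxA, hxB]; simp only [hA, hB]
      by_cases hc : μ = c
      · rw [if_pos hc, if_pos hc, ← hc, hμ]; ring
      · rw [if_neg hc, if_neg hc, add_zero]
    · rw [finsum_pair'
        (fun q : (ℝ × ℝ) × (ℝ × ℝ) => if q.2.2 = c then x q * (q.1.2 - c) else 0) A B hAB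
        (fun q h1 h2 => by simp [hxcase q h1 h2])]
      simp only [hA, hB, hxA, hxB]
      split_ifs with h1 h2 h3 <;> subst_vars <;> ring
  -- revenue
  have hpayA : pay 1 1 (r1, r2) (μ, r2) = r1 * (r2 / μ) := by
    rw [pay]; simp only [one_mul]
    rw [if_pos hr2μ]
  have hpayB : pay 1 1 (r1', r2') (μ, r2') = r1' * (r2' / μ) := by
    rw [pay]; simp only [one_mul]
    rw [if_pos hr2'μ]
  have hrev : Rev 1 1 x = p * r2 + (1 - p) * r2' +
      p * (1 - p) * (r1 - r1') * (r2 - r2') / (p * r1 + (1 - p) * r1') := by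
    rw [Rev, finsum_pair'
      (fun q : (ℝ × ℝ) × (ℝ × ℝ) => x q * pay 1 1 q.1 q.2) A B hAB
      (fun q h1 h2 => by simp [hxcase q h1 h2])]
    simp only [hxA, hxB]; simp only [hA, hB]
    rw [hpayA, hpayB, ← hμ]
    have hμne : μ ≠ 0 := hμpos.ne'
    field_simp
    rw [hμ]; ring
  have hpos : 0 < p * (1 - p) * (r1 - r1') * (r2 - r2') / (p * r1 + (1 - p) * r1') := by
    refine div_pos ?_ (by rw [hμ] at hμpos; exact hμpos)
    have h1p : 0 < 1 - p := by linarith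
    exact mul_pos (mul_pos (mul_pos hp0 h1p) (by linarith)) (by linarith)
  exact ⟨hnd, hfd, x, hinfo, hcal, hrev, by rw [hrev]; linarith⟩
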